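/- In a rooted phylogenetic network N, for distinct leaves i, j, k: if there exist a common ancestor v of i and j with l_N − d(v,r) = h_N(i,j), a common ancestor w of i and k with l_N − d(w,r) = h_N(i,k), h_N(i,j) < h_N(i,k), and directed paths from v to i and j that are internally disjoint, then any directed path from w to k is internally disjoint from some path from v to i, yielding the node-disjoint path system witnessing consistency of ij|k with N. -/

import Mathlib

/-- A directed walk of length `n` (number of edges) from `u` to `v` in the digraph `E`. -/
def DiWalk {V : Type} (E : V → V → Prop) (u v : V) (n : ℕ) : Prop :=
  ∃ f : Fin (n + 1) → V, f 0 = u ∧ f (Fin.last n) = v ∧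
    ∀ i : Fin n, E (f i.castSucc) (f i.succ)

/-- A rooted phylogenetic network on the taxa set `X`: a finite rooted directed acyclic
graph in which every node is reachable from the root, the root has no incoming edge,
and the sinks are exactly the leaves, which are distinctly labeled by `X`. -/
structure PhyloNet (X : Type) where
  V : Type
  [fin : Fintype V]
  edge : V → V → Prop
  acyclic : ∀ v, ¬ Relation.TransGen edge v v
  root : V
  root_src : ∀ v, ¬ edge v root
  reach : ∀ v, Relation.ReflTransGen edge root v
  leaf : X → V
  leaf_inj : Function.Injective leaf
  leaf_sink : ∀ (x : X) (v : V), ¬ edge (leaf x) v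
  sink_leaf : ∀ v : V, (∀ w, ¬ edge v w) → ∃ x, v = leaf x

/-- `u` is an ancestor of `v` (there is a directed path from `u` to `v`). -/
def PhyloNet.anc {X : Type} (N : PhyloNet X) (u v : N.V) : Prop :=
  Relation.ReflTransGen N.edge u v

/-- `d(v,r)`: the length of the longest directed path from the root to `v`. -/
noncomputable def PhyloNet.dep {X : Type} (N : PhyloNet X) (v : N.V) : ℕ :=
  sSup {n | DiWalk N.edge N.root v n}

/-- `l_N`: the length of the longest directed path from the root to a leaf. -/
noncomputable def PhyloNet.lN {X : Type} (N : PhyloNet X) : ℕ :=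
  sSup {n | ∃ x : X, DiWalk N.edge N.root (N.leaf x) n}

/-- `c` is a lowest common ancestor of `u` and `v`: a common ancestor no proper
descendant of which is a common ancestor of `u` and `v`. -/
def PhyloNet.IsLCA {X : Type} (N : PhyloNet X) (u v c : N.V) : Prop :=
  N.anc c u ∧ N.anc c v ∧ ∀ w, N.anc c w → N.anc w u → N.anc w v → w = c

/-- The height function of the network `N`:
`h_N(i,j) = min { l_N − d(c,r) : c a lowest common ancestor of i and j }`. -/
noncomputable def PhyloNet.hN {X : Type} (N : PhyloNet X) (i j : X) : ℕ :=
  sInf {m | ∃ c : N.V, N.IsLCA (N.leaf i) (N.leaf j) c ∧ m = N.lN - N.dep c}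

/-- `f` is a directed path (walk with no repeated node) from `u` to `v`. -/
def IsDiPath {V : Type} (E : V → V → Prop) {n : ℕ} (f : Fin (n + 1) → V) (u v : V) : Prop :=
  f 0 = u ∧ f (Fin.last n) = v ∧ (∀ i : Fin n, E (f i.castSucc) (f i.succ)) ∧
    Function.Injective f

/-- Two paths are internally node-disjoint: every common node is an endpoint of both. -/
def IntDisj {V : Type} {m n : ℕ} (f : Fin (m + 1) → V) (g : Fin (n + 1) → V) : Prop :=
  ∀ (a : Fin (m + 1)) (b : Fin (n + 1)), f a = g b →
    (a = 0 ∨ a = Fin.last m) ∧ (b = 0 ∨ b = Fin.last n)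

/-- The triplet `ij|k` is consistent with the network `N`: `N` contains distinct nodes
`u`, `v` and pairwise internally node-disjoint directed paths
`u → i`, `u → j`, `v → u`, and `v → k`. -/
def PhyloNet.TripCons {X : Type} (N : PhyloNet X) (i j k : X) : Prop :=
  ∃ u v : N.V, u ≠ v ∧
    ∃ (a b c d : ℕ) (p : Fin (a + 1) → N.V) (q : Fin (b + 1) → N.V)
      (s : Fin (c + 1) → N.V) (t : Fin (d + 1) → N.V),
      IsDiPath N.edge p u (N.leaf i) ∧ IsDiPath N.edge q u (N.leaf j) ∧
      IsDiPath N.edge s v u ∧ IsDiPath N.edge t v (N.leaf k) ∧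
      IntDisj p q ∧ IntDisj p s ∧ IntDisj p t ∧ IntDisj q s ∧ IntDisj q t ∧ IntDisj s t

namespace Aux

variable {V : Type} {E : V → V → Prop}

lemma diwalk_refl (u : V) : DiWalk E u u 0 :=
  ⟨fun _ => u, rfl, rfl, fun i => i.elim0⟩

lemma diwalk_snoc {u x y : V} {n : ℕ} (h : DiWalk E u x n) (e : E x y) :
    DiWalk E u y (n + 1) := by
  obtain ⟨f, h0, hl, he⟩ := h
  refine ⟨Fin.snoc f y, ?_, ?_, ?_⟩
  · have : ((0 : Fin (n+2))) = Fin.castSucc 0 := rfl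
    rw [this, Fin.snoc_castSucc]; exact h0
  · simp [Fin.snoc_last]
  · intro i
    rcases eq_or_lt_of_le (Nat.lt_succ_iff.mp i.isLt) with hi | hi
    · have hi' : i = Fin.last n := Fin.ext hi
      subst hi'
      have h1 : (Fin.last n).castSucc = Fin.castSucc (Fin.last n) := rfl
      have h2 : (Fin.last n).succ = Fin.last (n+1) := rfl
      rw [h1, Fin.snoc_castSucc, h2, Fin.snoc_last, hl]
      exact e
    · have h1 : i.castSucc = Fin.castSucc i := rfl
      have h2 : i.succ = Fin.castSucc ⟨i.val + 1, Nat.succ_lt_succ hi⟩ := by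
        apply Fin.ext; simp
      rw [h1, Fin.snoc_castSucc, h2, Fin.snoc_castSucc]
      have h3 : (⟨i.val + 1, Nat.succ_lt_succ hi⟩ : Fin (n+1)) = (⟨i.val, hi⟩ : Fin n).succ := by
        apply Fin.ext; simp
      have h4 : i = Fin.castSucc ⟨i.val, hi⟩ := by apply Fin.ext; simp
      rw [h3]
      have h5 := he ⟨i.val, hi⟩
      rwa [← h4] at h5

lemma diwalk_of_rtg {u v : V} (h : Relation.ReflTransGen E u v) :
    ∃ n, DiWalk E u v n := by
  induction h with
  | refl => exact ⟨0, diwalk_refl u⟩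
  | tail _ e ih => obtain ⟨n, hn⟩ := ih; exact ⟨n + 1, diwalk_snoc hn e⟩

lemma rtg_of_walk_aux {n : ℕ} {f : Fin (n+1) → V}
    (hf : ∀ i : Fin n, E (f i.castSucc) (f i.succ)) :
    ∀ (m : ℕ) (a : Fin (n+1)) (h : a.val + m ≤ n),
      Relation.ReflTransGen E (f a) (f ⟨a.val + m, Nat.lt_succ_of_le h⟩) := by
  intro m
  induction m with
  | zero =>
    intro a h
    have : (⟨a.val + 0, Nat.lt_succ_of_le h⟩ : Fin (n+1)) = a := by apply Fin.ext; simp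
    rw [this]
  | succ m ih =>
    intro a h
    have h' : a.val + m ≤ n := by omega
    refine Relation.ReflTransGen.tail (ih a h') ?_
    have hm : a.val + m < n := by omega
    have h1 : (⟨a.val + m, Nat.lt_succ_of_le h'⟩ : Fin (n+1)) = (⟨a.val + m, hm⟩ : Fin n).castSucc := by
      apply Fin.ext; simp
    have h2 : (⟨a.val + (m+1), Nat.lt_succ_of_le h⟩ : Fin (n+1)) = (⟨a.val + m, hm⟩ : Fin n).succ := by
      apply Fin.ext; simp [Nat.add_assoc]
    rw [h1, h2]
    exact hf _

lemma rtg_of_walk {n : ℕ} {f : Fin (n+1) → V}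
    (hf : ∀ i : Fin n, E (f i.castSucc) (f i.succ)) {a b : Fin (n+1)} (hab : a ≤ b) :
    Relation.ReflTransGen E (f a) (f b) := by
  have h : a.val + (b.val - a.val) ≤ n := by omega
  have := rtg_of_walk_aux hf (b.val - a.val) a h
  have hb : (⟨a.val + (b.val - a.val), Nat.lt_succ_of_le h⟩ : Fin (n+1)) = b := by
    apply Fin.ext; simp; omega
  rwa [hb] at this

lemma tg_of_walk {n : ℕ} {f : Fin (n+1) → V}
    (hf : ∀ i : Fin n, E (f i.castSucc) (f i.succ)) {a b : Fin (n+1)} (hab : a < b) :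
    Relation.TransGen E (f a) (f b) := by
  have ha : a.val < n := by omega
  have h1 : a = (⟨a.val, ha⟩ : Fin n).castSucc := by apply Fin.ext; simp
  have h2 : ((⟨a.val, ha⟩ : Fin n).succ : Fin (n+1)) ≤ b := by
    rw [Fin.le_def, Fin.val_succ]
    exact Nat.succ_le_of_lt (Fin.lt_def.mp hab)
  have he := hf ⟨a.val, ha⟩
  rw [← h1] at he
  exact Relation.TransGen.head' he (rtg_of_walk hf h2)


variable {X : Type} (N : PhyloNet X)

attribute [local instance] PhyloNet.fin

lemma walk_le_card {u v : N.V} {n : ℕ} (h : DiWalk N.edge u v n) :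
    n ≤ Fintype.card N.V := by
  letI := N.fin
  by_contra hn
  push_neg at hn
  obtain ⟨f, h0, hl, he⟩ := h
  obtain ⟨x, y, hxy, hfxy⟩ := Fintype.exists_ne_map_eq_of_card_lt f
    (by simp only [Fintype.card_fin]; omega)
  rcases lt_or_gt_of_ne hxy with hlt | hlt
  · have tg := tg_of_walk he hlt
    rw [hfxy] at tg
    exact N.acyclic _ tg
  · have tg := tg_of_walk he hlt
    rw [hfxy] at tg
    exact N.acyclic _ tg

lemma depSet_ne (v : N.V) : {n | DiWalk N.edge N.root v n}.Nonempty :=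
  diwalk_of_rtg (N.reach v)

lemma depSet_bdd (v : N.V) : BddAbove {n | DiWalk N.edge N.root v n} :=
  ⟨Fintype.card N.V, fun _ hn => walk_le_card N hn⟩

lemma dep_walk (v : N.V) : DiWalk N.edge N.root v (N.dep v) :=
  Nat.sSup_mem (depSet_ne N v) (depSet_bdd N v)

lemma dep_lt_of_edge {x y : N.V} (e : N.edge x y) : N.dep x < N.dep y := by
  have h := diwalk_snoc (dep_walk N x) e
  have h2 : N.dep x + 1 ≤ N.dep y := le_csSup (depSet_bdd N y) h
  omega

lemma dep_le_of_anc {x y : N.V} (h : N.anc x y) : N.dep x ≤ N.dep y := by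
  induction h with
  | refl => exact le_refl _
  | tail _ e ih => exact ih.trans (dep_lt_of_edge N e).le

lemma dep_lt_of_tg {x y : N.V} (h : Relation.TransGen N.edge x y) :
    N.dep x < N.dep y := by
  induction h with
  | single e => exact dep_lt_of_edge N e
  | tail _ e ih => exact ih.trans (dep_lt_of_edge N e)

lemma dep_leaf_le_lN (x : X) : N.dep (N.leaf x) ≤ N.lN := by
  refine le_csSup ⟨Fintype.card N.V, fun n hn => ?_⟩ ⟨x, dep_walk N (N.leaf x)⟩
  obtain ⟨y, hy⟩ := hn
  exact walk_le_card N hy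

lemma exists_lca (c u1 u2 : N.V) (h1 : N.anc c u1) (h2 : N.anc c u2) :
    ∃ m, N.IsLCA u1 u2 m ∧ N.anc c m := by
  letI := N.fin
  have hfin : {z : N.V | N.anc c z ∧ N.anc z u1 ∧ N.anc z u2}.Finite := Set.toFinite _
  obtain ⟨m, hm, hmax'⟩ := hfin.exists_maximalFor N.dep _
    ⟨c, Relation.ReflTransGen.refl, h1, h2⟩
  have hmax : ∀ w' ∈ {z : N.V | N.anc c z ∧ N.anc z u1 ∧ N.anc z u2},
      N.dep m ≤ N.dep w' → N.dep m = N.dep w' :=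
    fun w' hw hle => le_antisymm hle (hmax' hw hle)
  refine ⟨m, ⟨hm.2.1, hm.2.2, ?_⟩, hm.1⟩
  intro w' hmw' hw'1 hw'2
  have hw'S : w' ∈ {z : N.V | N.anc c z ∧ N.anc z u1 ∧ N.anc z u2} :=
    ⟨hm.1.trans hmw', hw'1, hw'2⟩
  have heq := hmax w' hw'S (dep_le_of_anc N hmw')
  rcases hmw'.cases_head with h | ⟨z, e, hz⟩
  · exact h.symm
  · exact absurd heq (ne_of_lt (dep_lt_of_tg N (Relation.TransGen.head' e hz)))

end Aux

/-- the disjointness step in the proof that height dominance implies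
triplet consistency.  Let `v` be a common ancestor of leaves `i, j` realizing
`h_N(i,j)` and `w` a common ancestor of `i, k` realizing `h_N(i,k)`, with
`h_N(i,j) < h_N(i,k)`, and suppose there are internally node-disjoint paths from
`v` to `i` and to `j`.  Then every directed path from `w` to `k` is internally
node-disjoint from some directed path from `v` to `i`. -/
theorem disjoint_path_step {X : Type} (N : PhyloNet X) (i j k : X)
    (hij : i ≠ j) (hik : i ≠ k) (hjk : j ≠ k) (v w : N.V)
    (hvi : N.anc v (N.leaf i)) (hvj : N.anc v (N.leaf j))
    (hveq : N.lN - N.dep v = N.hN i j)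
    (hwi : N.anc w (N.leaf i)) (hwk : N.anc w (N.leaf k))
    (hweq : N.lN - N.dep w = N.hN i k)
    (hlt : N.hN i j < N.hN i k)
    (a b : ℕ) (p : Fin (a + 1) → N.V) (q : Fin (b + 1) → N.V)
    (hp : IsDiPath N.edge p v (N.leaf i)) (hq : IsDiPath N.edge q v (N.leaf j))
    (hpq : IntDisj p q) :
    ∀ (c : ℕ) (t : Fin (c + 1) → N.V), IsDiPath N.edge t w (N.leaf k) →
      ∃ (a' : ℕ) (p' : Fin (a' + 1) → N.V),
        IsDiPath N.edge p' v (N.leaf i) ∧ IntDisj p' t := by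
  intro c t ht
  obtain ⟨hp0, hpl, hpe, hpinj⟩ := hp
  obtain ⟨ht0, htl, hte, htinj⟩ := ht
  -- basic depth facts
  have hwlN : N.dep w < N.lN ∧ N.dep w < N.dep v := by
    constructor <;> omega
  refine ⟨a, p, ⟨hp0, hpl, hpe, hpinj⟩, ?_⟩
  intro ia ib heq
  exfalso
  -- the shared node x = p ia = t ib
  have hx_anc_i : N.anc (p ia) (N.leaf i) := by
    have := Aux.rtg_of_walk hpe (Fin.le_last ia)
    rwa [hpl] at this
  have hv_anc_x : N.anc v (p ia) := by
    have := Aux.rtg_of_walk hpe (Fin.zero_le ia)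
    rwa [hp0] at this
  have hx_anc_k : N.anc (t ib) (N.leaf k) := by
    have := Aux.rtg_of_walk hte (Fin.le_last ib)
    rwa [htl] at this
  -- case on position of ib
  rcases eq_or_ne ib 0 with hb0 | hb0
  · -- shared node is w: impossible since dep w < dep v ≤ dep (p ia)
    have : p ia = w := by rw [heq, hb0, ht0]
    have hle := Aux.dep_le_of_anc N hv_anc_x
    rw [this] at hle
    omega
  rcases eq_or_ne ib (Fin.last c) with hbl | hbl
  · -- shared node is leaf k
    have hkx : p ia = N.leaf k := by rw [heq, hbl, htl]
    rcases eq_or_ne ia (Fin.last a) with hal | hal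
    · rw [hal, hpl] at hkx
      exact hik (N.leaf_inj hkx)
    · have hia : ia.val < a := by
        rcases Nat.lt_succ_iff_lt_or_eq.mp ia.isLt with h | h
        · exact h
        · exact absurd (Fin.ext h) hal
      have he := hpe ⟨ia.val, hia⟩
      have hcs : (⟨ia.val, hia⟩ : Fin a).castSucc = ia := by apply Fin.ext; simp
      rw [hcs, hkx] at he
      exact N.leaf_sink k _ he
  · -- ib internal: t ib is a common ancestor of i and k strictly below w
    have hb0' : (0 : Fin (c+1)) < ib := by
      rcases Fin.eq_zero_or_eq_succ ib with h | _
      · exact absurd h hb0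
      · exact Fin.pos_iff_ne_zero.mpr hb0
    have htg : Relation.TransGen N.edge w (t ib) := by
      have := Aux.tg_of_walk hte hb0'
      rwa [ht0] at this
    have hdw : N.dep w < N.dep (t ib) := Aux.dep_lt_of_tg N htg
    have hx_anc_i' : N.anc (t ib) (N.leaf i) := heq ▸ hx_anc_i
    obtain ⟨m, hmLCA, hm_anc⟩ := Aux.exists_lca N (t ib) (N.leaf i) (N.leaf k)
      hx_anc_i' hx_anc_k
    have hdm : N.dep (t ib) ≤ N.dep m := Aux.dep_le_of_anc N hm_anc
    have hhle : N.hN i k ≤ N.lN - N.dep m :=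
      Nat.sInf_le ⟨m, hmLCA, rfl⟩
    omega
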